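/- Let γ₁, γ₂ > 0 and set γ := γ₁γ₂/(γ₁+γ₂). Let 𝐅 be a distribution function of a positive random variable (non-decreasing, right-continuous, lim_{x→−∞} 𝐅(x) = 0, lim_{x→∞} 𝐅(x) = 1) with Lebesgue–Stieltjes measure μ_𝐅, and suppose 𝐅̄ := 1 − 𝐅 is regularly varying at infinity with index −1/γ₁. Let 𝐆̄ : (0,∞) → (0,1] be non-increasing and regularly varying at infinity with index −1/γ₂, and let p > 0. Define F̄(x) := p^{−1} ∫_{(x,∞)} 𝐆̄(z) dμ_𝐅(z). Then F̄ is regularly varying at infinity with index −1/γ, i.e. for every s > 0, lim_{x→∞} F̄(sx)/F̄(x) = s^{−1/γ}. -/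

import Mathlib

open Filter Set MeasureTheory

/-- Let `γ₁, γ₂ > 0`, `γ = γ₁γ₂/(γ₁+γ₂)`. Let `F` be the distribution
function of a positive random variable (a Stieltjes function vanishing on the negatives
with limit `1` at `+∞`) whose tail `1 - F` is regularly varying at infinity with index
`-1/γ₁`. Let `Gbar : (0,∞) → (0,1]` be non-increasing and regularly varying at infinity
with index `-1/γ₂`, and `p > 0`. Then `Fbar x = p⁻¹ ∫_(x,∞) Gbar z dF(z)` is regularly
varying at infinity with index `-1/γ`. -/
theorem stmt_12 (γ₁ γ₂ γ : ℝ) (hγ₁ : 0 < γ₁) (hγ₂ : 0 < γ₂)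
    (hγ : γ = γ₁ * γ₂ / (γ₁ + γ₂))
    (F : StieltjesFunction ℝ)
    (hFneg : ∀ x < (0 : ℝ), F x = 0)
    (hFbot : Tendsto F atBot (nhds 0)) (hFtop : Tendsto F atTop (nhds 1))
    (hFtail : ∀ s > (0 : ℝ),
      Tendsto (fun x : ℝ => (1 - F (s * x)) / (1 - F x)) atTop (nhds (s ^ (-1 / γ₁))))
    (Gbar : ℝ → ℝ)
    (hGrange : ∀ x > (0 : ℝ), 0 < Gbar x ∧ Gbar x ≤ 1)
    (hGanti : AntitoneOn Gbar (Ioi 0))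
    (hGtail : ∀ s > (0 : ℝ),
      Tendsto (fun y : ℝ => Gbar (s * y) / Gbar y) atTop (nhds (s ^ (-1 / γ₂))))
    (p : ℝ) (hp : 0 < p)
    (Fbar : ℝ → ℝ)
    (hFbar : ∀ x, Fbar x = p⁻¹ * ∫ z in Ioi x, Gbar z ∂F.measure) :
    ∀ s > (0 : ℝ),
      Tendsto (fun x : ℝ => Fbar (s * x) / Fbar x) atTop (nhds (s ^ (-1 / γ))) := by
  have hγ₁0 : γ₁ ≠ 0 := hγ₁.ne'
  have hγ₂0 : γ₂ ≠ 0 := hγ₂.ne'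
  have hγpos : 0 < γ := by rw [hγ]; positivity
  -- basic facts about F
  have hFle1 : ∀ x, F x ≤ 1 := by
    intro x
    refine ge_of_tendsto hFtop ?_
    filter_upwards [eventually_ge_atTop x] with y hy using F.mono hy
  have hF0 : ∀ x, 0 ≤ F x := by
    intro x
    rcases lt_or_ge x 0 with h | h
    · exact (hFneg x h).ge
    · have h1 := hFneg (-1) (by norm_num)
      calc (0:ℝ) = F (-1) := h1.symm
        _ ≤ F x := F.mono (by linarith)
  have hTtop : Tendsto (fun x : ℝ => 1 - F x) atTop (nhds 0) := by
    have := hFtop.const_sub 1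
    simpa using this
  have hTpos : ∀ x, 0 < 1 - F x := by
    by_contra h
    push_neg at h
    obtain ⟨x₀, hx₀⟩ := h
    have hev : ∀ᶠ x in atTop, (1 - F (2 * x)) / (1 - F x) = 0 := by
      filter_upwards [eventually_ge_atTop x₀] with x hx
      have h1 : F x = 1 := le_antisymm (hFle1 x) (by have := F.mono hx; linarith)
      simp [h1]
    have h2 : Tendsto (fun x : ℝ => (1 - F (2 * x)) / (1 - F x)) atTop (nhds 0) :=
      Tendsto.congr' (hev.mono fun x h => h.symm) tendsto_const_nhds
    have h3 := tendsto_nhds_unique h2 (hFtail 2 two_pos)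
    exact absurd h3.symm (ne_of_gt (Real.rpow_pos_of_pos two_pos _))
  -- measure facts
  set μ := F.measure with hμdef
  haveI : IsProbabilityMeasure μ := F.isProbabilityMeasure hFbot hFtop
  have hμIoi : ∀ x, μ (Ioi x) = ENNReal.ofReal (1 - F x) := by
    intro x
    have h1 : μ (Iic x) = ENNReal.ofReal (F x) := by
      have := F.measure_Iic hFbot x
      simpa using this
    have h2 : μ (Ioi x) = μ univ - μ (Iic x) := by
      rw [← measure_compl measurableSet_Iic (measure_ne_top μ _), compl_Iic]
    rw [h2, h1, measure_univ, ← ENNReal.ofReal_one, ← ENNReal.ofReal_sub _ (hF0 x)]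
  -- the modified integrand g
  set g : ℝ → ℝ := fun z => Gbar (max z 1) with hgdef
  have hmax : ∀ z : ℝ, (0:ℝ) < max z 1 := fun z => lt_of_lt_of_le one_pos (le_max_right z 1)
  have hganti : Antitone g := fun a b hab =>
    hGanti (hmax a) (hmax b) (max_le_max hab le_rfl)
  have hgpos : ∀ z, 0 < g z := fun z => (hGrange _ (hmax z)).1
  have hgle1 : ∀ z, g z ≤ 1 := fun z => (hGrange _ (hmax z)).2
  have hgeq : ∀ z : ℝ, 1 ≤ z → g z = Gbar z := by
    intro z hz
    simp only [hgdef, max_eq_left hz]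
  have hgint : ∀ s : Set ℝ, IntegrableOn g s μ := by
    intro s
    refine Integrable.integrableOn ?_
    refine (integrable_const (1:ℝ)).mono' hganti.measurable.aestronglyMeasurable ?_
    exact ae_of_all _ fun z => by
      rw [Real.norm_eq_abs, abs_of_pos (hgpos z)]; exact hgle1 z
  set U : ℝ → ℝ := fun x => ∫ z in Ioi x, g z ∂μ with hUdef
  have hU0 : ∀ x, 0 ≤ U x := fun x =>
    setIntegral_nonneg measurableSet_Ioi fun z _ => (hgpos z).le
  have hUsplit : ∀ x y : ℝ, x ≤ y → U x = (∫ z in Ioc x y, g z ∂μ) + U y := by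
    intro x y hxy
    simp only [hUdef]
    rw [← Ioc_union_Ioi_eq_Ioi hxy, setIntegral_union (Ioc_disjoint_Ioi le_rfl)
        measurableSet_Ioi (hgint _) (hgint _)]
  have hμIoc : ∀ a b : ℝ, μ (Ioc a b) = ENNReal.ofReal (F b - F a) := by
    intro a b
    rw [hμdef]
    exact F.measure_Ioc a b
  have hconst : ∀ (s : Set ℝ) (c : ℝ), (∫ _ in s, c ∂μ) = (μ s).toReal * c := by
    intro s c
    rw [setIntegral_const, smul_eq_mul]
    rfl
  have hIocUB : ∀ x y : ℝ, x ≤ y → (∫ z in Ioc x y, g z ∂μ) ≤ g x * (F y - F x) := by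
    intro x y hxy
    calc (∫ z in Ioc x y, g z ∂μ) ≤ ∫ _ in Ioc x y, g x ∂μ :=
        setIntegral_mono_on (hgint _) (integrableOn_const (measure_ne_top μ _))
          measurableSet_Ioc fun z hz => hganti hz.1.le
      _ = g x * (F y - F x) := by
        rw [hconst, hμIoc, ENNReal.toReal_ofReal (by have := F.mono hxy; linarith), mul_comm]
  have hIocLB : ∀ x y : ℝ, x ≤ y → g y * (F y - F x) ≤ ∫ z in Ioc x y, g z ∂μ := by
    intro x y hxy
    calc g y * (F y - F x) = ∫ _ in Ioc x y, g y ∂μ := by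
          rw [hconst, hμIoc, ENNReal.toReal_ofReal (by have := F.mono hxy; linarith), mul_comm]
      _ ≤ ∫ z in Ioc x y, g z ∂μ :=
        setIntegral_mono_on (integrableOn_const (measure_ne_top μ _)) (hgint _)
          measurableSet_Ioc fun z hz => hganti hz.2
  have hUle : ∀ x, U x ≤ g x * (1 - F x) := by
    intro x
    calc U x ≤ ∫ _ in Ioi x, g x ∂μ :=
        setIntegral_mono_on (hgint _) (integrableOn_const (measure_ne_top μ _))
          measurableSet_Ioi fun z hz => hganti (le_of_lt hz)
      _ = g x * (1 - F x) := by
        rw [hconst, hμIoi, ENNReal.toReal_ofReal (hTpos x).le, mul_comm]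
  have hUge : ∀ x y : ℝ, x ≤ y → g y * (F y - F x) ≤ U x := by
    intro x y hxy
    refine (hIocLB x y hxy).trans ?_
    rw [hUsplit x y hxy]
    linarith [hU0 y]
  have hUpos : ∀ x, 0 < U x := by
    intro x
    obtain ⟨y, hy1, hy2⟩ : ∃ y, x ≤ y ∧ 1 - F y < 1 - F x := by
      obtain ⟨y, h1, h2⟩ := ((hTtop.eventually_lt_const (hTpos x)).and
        (eventually_ge_atTop x)).exists
      exact ⟨y, h2, h1⟩
    have h3 : 0 < g y * (F y - F x) := mul_pos (hgpos y) (by linarith)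
    exact lt_of_lt_of_le h3 (hUge x y hy1)
  -- ratio limits
  have hTr : ∀ s : ℝ, 0 < s →
      Tendsto (fun x : ℝ => (1 - F (s * x)) / (1 - F x)) atTop (nhds (s ^ (-1 / γ₁))) :=
    fun s hs => hFtail s hs
  have hgr : ∀ s : ℝ, 0 < s →
      Tendsto (fun x : ℝ => g (s * x) / g x) atTop (nhds (s ^ (-1 / γ₂))) := by
    intro s hs
    refine (hGtail s hs).congr' ?_
    filter_upwards [eventually_ge_atTop (max 1 s⁻¹)] with x hx
    have hx1 : (1:ℝ) ≤ x := le_trans (le_max_left _ _) hx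
    have hsx1 : (1:ℝ) ≤ s * x := by
      have h1 : s⁻¹ ≤ x := le_trans (le_max_right _ _) hx
      calc (1:ℝ) = s * s⁻¹ := (mul_inv_cancel₀ hs.ne').symm
        _ ≤ s * x := mul_le_mul_of_nonneg_left h1 hs.le
    rw [hgeq _ hsx1, hgeq _ hx1]
  -- the key ratio A
  set A : ℝ → ℝ := fun x => U x / (g x * (1 - F x)) with hAdef
  have hden : ∀ x, 0 < g x * (1 - F x) := fun x => mul_pos (hgpos x) (hTpos x)
  have hA1 : ∀ x, A x ≤ 1 := fun x => (div_le_one (hden x)).2 (hUle x)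
  have hA0 : ∀ x, 0 < A x := fun x => div_pos (hUpos x) (hden x)
  have hAbdd : IsBoundedUnder (· ≤ ·) atTop A := isBoundedUnder_of ⟨1, hA1⟩
  have hAbdd' : IsBoundedUnder (· ≥ ·) atTop A := isBoundedUnder_of ⟨0, fun x => (hA0 x).le⟩
  -- the key geometric-decomposition estimate
  have key : ∀ q : ℝ, 1 < q → ∀ N : ℕ,
      limsup A atTop ≤ q ^ ((1:ℝ)/γ₂) * liminf A atTop
        + ((q:ℝ) ^ N) ^ (-1/γ₂) * ((q:ℝ) ^ N) ^ (-1/γ₁) := by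
    intro q hq N
    have hq0 : (0:ℝ) < q := lt_trans one_pos hq
    have hqk : ∀ k : ℕ, (0:ℝ) < q ^ k := fun k => pow_pos hq0 k
    have hqmono : ∀ (k : ℕ) (x : ℝ), 0 < x → q ^ k * x ≤ q ^ (k+1) * x := by
      intro k x hx
      have h1 : q ^ k ≤ q ^ (k+1) := pow_le_pow_right₀ hq.le (Nat.le_succ k)
      exact mul_le_mul_of_nonneg_right h1 hx.le
    have hsplitN : ∀ (M : ℕ) (x : ℝ), 0 < x →
        U x = (∑ k ∈ Finset.range M, ∫ z in Ioc (q ^ k * x) (q ^ (k+1) * x), g z ∂μ)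
          + U (q ^ M * x) := by
      intro M x hx
      induction M with
      | zero => simp
      | succ n ih =>
        rw [Finset.sum_range_succ, ih, add_assoc]
        congr 1
        exact hUsplit _ _ (hqmono n x hx)
    -- lower bound for A
    set SL : ℝ → ℝ := fun x => ∑ k ∈ Finset.range N,
      (g (q ^ (k+1) * x) / g x) * ((F (q ^ (k+1) * x) - F (q ^ k * x)) / (1 - F x))
      with hSLdef
    have hSLA : ∀ᶠ x in atTop, SL x ≤ A x := by
      filter_upwards [eventually_gt_atTop 0] with x hx
      have hnum : (∑ k ∈ Finset.range N,
          g (q ^ (k+1) * x) * (F (q ^ (k+1) * x) - F (q ^ k * x))) ≤ U x := by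
        calc (∑ k ∈ Finset.range N, g (q ^ (k+1) * x) * (F (q ^ (k+1) * x) - F (q ^ k * x)))
            ≤ ∑ k ∈ Finset.range N, ∫ z in Ioc (q ^ k * x) (q ^ (k+1) * x), g z ∂μ :=
              Finset.sum_le_sum fun k _ => hIocLB _ _ (hqmono k x hx)
          _ ≤ _ + U (q ^ N * x) := le_add_of_nonneg_right (hU0 _)
          _ = U x := (hsplitN N x hx).symm
      have heq : SL x = (∑ k ∈ Finset.range N,
          g (q ^ (k+1) * x) * (F (q ^ (k+1) * x) - F (q ^ k * x))) / (g x * (1 - F x)) := by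
        simp only [hSLdef]
        rw [Finset.sum_div]
        exact Finset.sum_congr rfl fun k _ => div_mul_div_comm _ _ _ _
      have hAx : A x = U x / (g x * (1 - F x)) := rfl
      rw [heq, hAx]
      exact div_le_div_of_nonneg_right hnum (hden x).le
    -- upper bound for A
    set SU : ℝ → ℝ := fun x => (∑ k ∈ Finset.range N,
        (g (q ^ k * x) / g x) * ((F (q ^ (k+1) * x) - F (q ^ k * x)) / (1 - F x)))
      + (g (q ^ N * x) / g x) * ((1 - F (q ^ N * x)) / (1 - F x)) with hSUdef
    have hASU : ∀ᶠ x in atTop, A x ≤ SU x := by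
      filter_upwards [eventually_gt_atTop 0] with x hx
      have hnum : U x ≤ (∑ k ∈ Finset.range N,
          g (q ^ k * x) * (F (q ^ (k+1) * x) - F (q ^ k * x)))
          + g (q ^ N * x) * (1 - F (q ^ N * x)) := by
        rw [hsplitN N x hx]
        have h1 : (∑ k ∈ Finset.range N, ∫ z in Ioc (q ^ k * x) (q ^ (k+1) * x), g z ∂μ)
            ≤ ∑ k ∈ Finset.range N, g (q ^ k * x) * (F (q ^ (k+1) * x) - F (q ^ k * x)) :=
          Finset.sum_le_sum fun k _ => hIocUB _ _ (hqmono k x hx)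
        have h2 := hUle (q ^ N * x)
        linarith
      have heq : SU x = ((∑ k ∈ Finset.range N,
          g (q ^ k * x) * (F (q ^ (k+1) * x) - F (q ^ k * x)))
          + g (q ^ N * x) * (1 - F (q ^ N * x))) / (g x * (1 - F x)) := by
        simp only [hSUdef]
        rw [add_div, Finset.sum_div]
        congr 1
        · exact Finset.sum_congr rfl fun k _ => div_mul_div_comm _ _ _ _
        · exact div_mul_div_comm _ _ _ _
      have hAx : A x = U x / (g x * (1 - F x)) := rfl
      rw [heq, hAx]
      exact div_le_div_of_nonneg_right hnum (hden x).le
    -- limits of SL and SU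
    have hterm : ∀ k : ℕ, Tendsto
        (fun x : ℝ => (F (q ^ (k+1) * x) - F (q ^ k * x)) / (1 - F x)) atTop
        (nhds ((q ^ k : ℝ) ^ (-1/γ₁) - (q ^ (k+1) : ℝ) ^ (-1/γ₁))) := by
      intro k
      have h1 := (hTr (q ^ k) (hqk k)).sub (hTr (q ^ (k+1)) (hqk (k+1)))
      refine h1.congr fun x => ?_
      rw [div_sub_div_same]
      ring_nf
    have hSLlim : Tendsto SL atTop (nhds (∑ k ∈ Finset.range N,
        ((q:ℝ) ^ (k+1)) ^ (-1/γ₂) * (((q:ℝ) ^ k) ^ (-1/γ₁) - ((q:ℝ) ^ (k+1)) ^ (-1/γ₁)))) := by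
      simp only [hSLdef]
      exact tendsto_finset_sum _ fun k _ => (hgr (q ^ (k+1)) (hqk (k+1))).mul (hterm k)
    have hSUlim : Tendsto SU atTop (nhds ((∑ k ∈ Finset.range N,
        ((q:ℝ) ^ k) ^ (-1/γ₂) * (((q:ℝ) ^ k) ^ (-1/γ₁) - ((q:ℝ) ^ (k+1)) ^ (-1/γ₁)))
        + ((q:ℝ) ^ N) ^ (-1/γ₂) * ((q:ℝ) ^ N) ^ (-1/γ₁))) := by
      simp only [hSUdef]
      exact (tendsto_finset_sum _ fun k _ => (hgr (q ^ k) (hqk k)).mul (hterm k)).add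
        ((hgr (q ^ N) (hqk N)).mul (hTr (q ^ N) (hqk N)))
    -- pass to liminf / limsup
    have hliminf_ge : (∑ k ∈ Finset.range N,
        ((q:ℝ) ^ (k+1)) ^ (-1/γ₂) * (((q:ℝ) ^ k) ^ (-1/γ₁) - ((q:ℝ) ^ (k+1)) ^ (-1/γ₁)))
        ≤ liminf A atTop := by
      rw [← hSLlim.liminf_eq]
      exact liminf_le_liminf hSLA hSLlim.isBoundedUnder_ge hAbdd.isCoboundedUnder_ge
    have hlimsup_le : limsup A atTop ≤ (∑ k ∈ Finset.range N,
        ((q:ℝ) ^ k) ^ (-1/γ₂) * (((q:ℝ) ^ k) ^ (-1/γ₁) - ((q:ℝ) ^ (k+1)) ^ (-1/γ₁)))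
        + ((q:ℝ) ^ N) ^ (-1/γ₂) * ((q:ℝ) ^ N) ^ (-1/γ₁) := by
      rw [← hSUlim.limsup_eq]
      exact limsup_le_limsup hASU hAbdd'.isCoboundedUnder_le hSUlim.isBoundedUnder_le
    -- compare the two sums
    have hqq : q ^ ((1:ℝ)/γ₂) * q ^ (-1/γ₂) = 1 := by
      rw [← Real.rpow_add hq0, show (1:ℝ)/γ₂ + -1/γ₂ = 0 by ring, Real.rpow_zero]
    have hsum_eq : (∑ k ∈ Finset.range N,
        ((q:ℝ) ^ k) ^ (-1/γ₂) * (((q:ℝ) ^ k) ^ (-1/γ₁) - ((q:ℝ) ^ (k+1)) ^ (-1/γ₁)))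
        = q ^ ((1:ℝ)/γ₂) * ∑ k ∈ Finset.range N,
        ((q:ℝ) ^ (k+1)) ^ (-1/γ₂) * (((q:ℝ) ^ k) ^ (-1/γ₁) - ((q:ℝ) ^ (k+1)) ^ (-1/γ₁)) := by
      rw [Finset.mul_sum]
      refine Finset.sum_congr rfl fun k _ => ?_
      rw [pow_succ, Real.mul_rpow (hqk k).le hq0.le, Real.mul_rpow (hqk k).le hq0.le]
      linear_combination (-(((q:ℝ)^k) ^ (-1/γ₂) * (((q:ℝ)^k) ^ (-1/γ₁)
        - ((q:ℝ)^k) ^ (-1/γ₁) * q ^ (-1/γ₁)))) * hqq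
    have hrpow0 : (0:ℝ) ≤ q ^ ((1:ℝ)/γ₂) := (Real.rpow_pos_of_pos hq0 _).le
    calc limsup A atTop ≤ _ := hlimsup_le
      _ ≤ q ^ ((1:ℝ)/γ₂) * liminf A atTop + ((q:ℝ) ^ N) ^ (-1/γ₂) * ((q:ℝ) ^ N) ^ (-1/γ₁) := by
        rw [hsum_eq]
        have := mul_le_mul_of_nonneg_left hliminf_ge hrpow0
        linarith
  -- tail term tends to zero, giving the clean comparison
  have hkey2 : ∀ q : ℝ, 1 < q → limsup A atTop ≤ q ^ ((1:ℝ)/γ₂) * liminf A atTop := by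
    intro q hq
    have hq0 : (0:ℝ) < q := lt_trans one_pos hq
    have h1 : Tendsto (fun N : ℕ => (q:ℝ) ^ N) atTop atTop :=
      tendsto_pow_atTop_atTop_of_one_lt hq
    have h2 := (tendsto_rpow_neg_atTop (by positivity : (0:ℝ) < 1/γ₂)).comp h1
    have h3 := (tendsto_rpow_neg_atTop (by positivity : (0:ℝ) < 1/γ₁)).comp h1
    have htail : Tendsto (fun N : ℕ => ((q:ℝ) ^ N) ^ (-1/γ₂) * ((q:ℝ) ^ N) ^ (-1/γ₁))
        atTop (nhds 0) := by
      have h4 := h2.mul h3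
      simp only [Function.comp_def] at h4
      simp only [neg_div]
      simpa using h4
    have hconv : Tendsto (fun N : ℕ => q ^ ((1:ℝ)/γ₂) * liminf A atTop
        + ((q:ℝ) ^ N) ^ (-1/γ₂) * ((q:ℝ) ^ N) ^ (-1/γ₁)) atTop
        (nhds (q ^ ((1:ℝ)/γ₂) * liminf A atTop)) := by
      have h5 := (tendsto_const_nhds (x := q ^ ((1:ℝ)/γ₂) * liminf A atTop)
        (f := atTop (α := ℕ))).add htail
      simpa using h5
    exact ge_of_tendsto' hconv (key q hq)
  -- positivity of the liminf
  have h2x : ∀ᶠ x in atTop, (g (2*x)/g x) * ((F (2*x) - F x)/(1 - F x)) ≤ A x := by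
    filter_upwards [eventually_gt_atTop 0] with x hx
    have h1 : g (2*x) * (F (2*x) - F x) ≤ U x := hUge x (2*x) (by linarith)
    have hAx : A x = U x / (g x * (1 - F x)) := rfl
    rw [div_mul_div_comm, hAx]
    exact div_le_div_of_nonneg_right h1 (hden x).le
  have h2lim : Tendsto (fun x : ℝ => (g (2*x)/g x) * ((F (2*x) - F x)/(1 - F x))) atTop
      (nhds ((2:ℝ) ^ (-1/γ₂) * (1 - (2:ℝ) ^ (-1/γ₁)))) := by
    refine (hgr 2 two_pos).mul ?_
    have h1 := (tendsto_const_nhds (x := (1:ℝ)) (f := atTop (α := ℝ))).sub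
      (hTr 2 two_pos)
    refine h1.congr fun x => ?_
    have h2 := (hTpos x).ne'
    field_simp
    ring
  have hliminf_pos : 0 < liminf A atTop := by
    have h3 : (2:ℝ) ^ (-1/γ₂) * (1 - (2:ℝ) ^ (-1/γ₁)) ≤ liminf A atTop := by
      rw [← h2lim.liminf_eq]
      exact liminf_le_liminf h2x h2lim.isBoundedUnder_ge hAbdd.isCoboundedUnder_ge
    have h5 : (2:ℝ) ^ (-1/γ₁) < 1 :=
      Real.rpow_lt_one_of_one_lt_of_neg one_lt_two
        (div_neg_of_neg_of_pos (by norm_num) hγ₁)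
    have h6 : (0:ℝ) < (2:ℝ) ^ (-1/γ₂) := Real.rpow_pos_of_pos two_pos _
    nlinarith
  have hliminf_le1 : liminf A atTop ≤ 1 := by
    have h1 : liminf A atTop ≤ liminf (fun _ : ℝ => (1:ℝ)) atTop :=
      liminf_le_liminf (Eventually.of_forall hA1) hAbdd'
        ((isBoundedUnder_of ⟨1, fun _ => le_rfl⟩).isCoboundedUnder_ge)
    simpa using h1
  -- liminf = limsup
  have hLeq : limsup A atTop = liminf A atTop := by
    refine le_antisymm ?_ (liminf_le_limsup hAbdd hAbdd')
    refine le_of_forall_pos_le_add fun ε hε => ?_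
    have hq1 : (1:ℝ) < (1+ε) ^ (γ₂ : ℝ) :=
      (Real.one_lt_rpow_iff_of_pos (by linarith)).2 (Or.inl ⟨by linarith, hγ₂⟩)
    have hqe : (((1+ε) ^ (γ₂ : ℝ)) : ℝ) ^ ((1:ℝ)/γ₂) = 1 + ε := by
      rw [← Real.rpow_mul (by linarith : (0:ℝ) ≤ 1+ε), mul_one_div, div_self hγ₂0,
        Real.rpow_one]
    have h7 := hkey2 _ hq1
    rw [hqe] at h7
    nlinarith [mul_le_mul_of_nonneg_left hliminf_le1 hε.le]
  have hAtendsto : Tendsto A atTop (nhds (liminf A atTop)) :=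
    tendsto_of_liminf_eq_limsup rfl hLeq hAbdd hAbdd'
  -- conclusion
  intro s hs
  have hsx : Tendsto (fun x : ℝ => s * x) atTop atTop :=
    Tendsto.const_mul_atTop hs tendsto_id
  have hAs : Tendsto (fun x : ℝ => A (s*x)) atTop (nhds (liminf A atTop)) :=
    hAtendsto.comp hsx
  have hL0 : liminf A atTop ≠ 0 := ne_of_gt hliminf_pos
  have hexp : -1/γ₂ + -1/γ₁ = -1/γ := by
    rw [hγ]
    field_simp
    ring
  have hcomb : Tendsto (fun x : ℝ => (A (s*x)/A x) * (g (s*x)/g x)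
      * ((1 - F (s*x))/(1 - F x))) atTop (nhds (s ^ (-1/γ))) := by
    have h8 := ((hAs.div hAtendsto hL0).mul (hgr s hs)).mul (hTr s hs)
    have h9 : liminf A atTop / liminf A atTop * s ^ (-1/γ₂) * s ^ (-1/γ₁)
        = s ^ (-1/γ) := by
      rw [div_self hL0, one_mul, ← Real.rpow_add hs, hexp]
    rwa [h9] at h8
  refine hcomb.congr' ?_
  filter_upwards [eventually_ge_atTop (max 1 s⁻¹)] with x hx
  have hx1 : (1:ℝ) ≤ x := le_trans (le_max_left _ _) hx
  have hsx1 : (1:ℝ) ≤ s * x := by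
    have h1 : s⁻¹ ≤ x := le_trans (le_max_right _ _) hx
    calc (1:ℝ) = s * s⁻¹ := (mul_inv_cancel₀ hs.ne').symm
      _ ≤ s * x := mul_le_mul_of_nonneg_left h1 hs.le
  have hFU : ∀ y : ℝ, 1 ≤ y → Fbar y = p⁻¹ * U y := by
    intro y hy
    rw [hFbar y]
    congr 1
    have hUy : U y = ∫ z in Ioi y, g z ∂μ := rfl
    rw [hUy]
    exact setIntegral_congr_fun measurableSet_Ioi fun z hz =>
      (hgeq z (le_trans hy (le_of_lt hz))).symm
  rw [hFU _ hsx1, hFU _ hx1, mul_div_mul_left _ _ (inv_ne_zero hp.ne')]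
  have hAx : ∀ y : ℝ, A y = U y / (g y * (1 - F y)) := fun y => rfl
  rw [hAx, hAx]
  have n1 := (hgpos x).ne'
  have n2 := (hgpos (s*x)).ne'
  have n3 := (hTpos x).ne'
  have n4 := (hTpos (s*x)).ne'
  have n5 := (hUpos x).ne'
  have n6 := (hUpos (s*x)).ne'
  field_simp
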